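/- Let A be a three-dimensional permutation array of size 2 × k × 2k with k odd, defined by a bijection φ : [2]×[k] → [2k]. Then for every (x_0, y_0) ∈ (ℤ_2 × ℤ_k) \ {(0,0)}, there exists z_0 ∈ ℤ_{2k} \ {0} such that the toroidal vector (x_0, y_0, z_0) occurs at least twice in A. -/
import Mathlib


/-- Let `A` be a three-dimensional permutation array of size
`2 × k × 2k` with `k` odd, defined by a bijection `φ : [2] × [k] → [2k]`.  Then for every
`(x₀, y₀) ∈ (ℤ₂ × ℤ_k) \ {(0,0)}` there exists `z₀ ∈ ℤ_{2k} \ {0}` such that the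
toroidal vector `(x₀, y₀, z₀)` occurs at least twice in `A`. -/
theorem repeated_toroidal_each_pair (k : ℕ) (hk : Odd k) (hk2 : 2 ≤ k)
    (φ : Fin 2 × Fin k ≃ Fin (2 * k))
    (x₀ : ZMod 2) (y₀ : ZMod k) (hxy : (x₀, y₀) ≠ (0, 0)) :
    ∃ z₀ : ZMod (2 * k), z₀ ≠ 0 ∧
      ∃ p₁ q₁ p₂ q₂ : Fin 2 × Fin k,
        p₁ ≠ q₁ ∧ p₂ ≠ q₂ ∧ (p₁, q₁) ≠ (p₂, q₂) ∧
        (((q₁.1 : ℤ) - (p₁.1 : ℤ)) : ZMod 2) = x₀ ∧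
        (((q₁.2 : ℤ) - (p₁.2 : ℤ)) : ZMod k) = y₀ ∧
        (((φ q₁ : ℤ) - (φ p₁ : ℤ)) : ZMod (2 * k)) = z₀ ∧
        (((q₂.1 : ℤ) - (p₂.1 : ℤ)) : ZMod 2) = x₀ ∧
        (((q₂.2 : ℤ) - (p₂.2 : ℤ)) : ZMod k) = y₀ ∧
        (((φ q₂ : ℤ) - (φ p₂ : ℤ)) : ZMod (2 * k)) = z₀ := by
  have hkpos : 0 < k := by omega
  haveI : NeZero k := ⟨by omega⟩
  haveI : NeZero (2 * k) := ⟨by omega⟩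
  set f : Fin 2 × Fin k → Fin 2 × Fin k := fun p =>
    (⟨(((p.1 : ℕ) : ZMod 2) + x₀).val, ZMod.val_lt _⟩,
     ⟨(((p.2 : ℕ) : ZMod k) + y₀).val, ZMod.val_lt _⟩) with hf
  have hfx : ∀ p, ((((f p).1 : ℤ) - (p.1 : ℤ)) : ZMod 2) = x₀ := by
    intro p
    push_cast [hf]
    rw [ZMod.natCast_val, ZMod.cast_id]
    ring
  have hfy : ∀ p, ((((f p).2 : ℤ) - (p.2 : ℤ)) : ZMod k) = y₀ := by
    intro p
    push_cast [hf]
    rw [ZMod.natCast_val, ZMod.cast_id]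
    ring
  have hfne : ∀ p, p ≠ f p := by
    intro p hp
    apply hxy
    have h1 := hfx p
    have h2 := hfy p
    rw [← hp] at h1 h2
    simp at h1 h2
    simp [← h1, ← h2]
  have key : ∀ p, ((((φ (f p)) : ℤ) - ((φ p) : ℤ)) : ZMod (2 * k)) ≠ 0 := by
    intro p h0
    have hne : φ (f p) ≠ φ p := fun h => hfne p (φ.injective h).symm
    apply hne
    have : (((φ (f p) : ℕ)) : ZMod (2 * k)) = ((φ p : ℕ) : ZMod (2 * k)) := by
      push_cast at h0
      linear_combination h0
    have := congrArg ZMod.val this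
    rw [ZMod.val_cast_of_lt (φ (f p)).isLt, ZMod.val_cast_of_lt (φ p).isLt] at this
    exact Fin.ext this
  have hmaps : ∀ p ∈ (Finset.univ : Finset (Fin 2 × Fin k)),
      ((((φ (f p)) : ℤ) - ((φ p) : ℤ)) : ZMod (2 * k)) ∈
        (Finset.univ : Finset (ZMod (2 * k))).erase 0 := by
    intro p _
    exact Finset.mem_erase.mpr ⟨key p, Finset.mem_univ _⟩
  have hcard : ((Finset.univ : Finset (ZMod (2 * k))).erase 0).card <
      (Finset.univ : Finset (Fin 2 × Fin k)).card := by
    rw [Finset.card_erase_of_mem (Finset.mem_univ _)]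
    simp [ZMod.card]
    omega
  obtain ⟨p₁, -, p₂, -, hne, heq⟩ :=
    Finset.exists_ne_map_eq_of_card_lt_of_maps_to hcard hmaps
  refine ⟨_, key p₁, p₁, f p₁, p₂, f p₂, hfne p₁, hfne p₂,
    fun h => hne (congrArg Prod.fst h), hfx p₁, hfy p₁, rfl, hfx p₂, hfy p₂, heq.symm⟩
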